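/- An ideal extension (an admissible set that is a subset of every preferred extension) is contained in every complete extension that is maximal among complete extensions, and any two ideal extensions of a finite argumentation framework are comparable in the sense that their union is admissible; in particular, in a finite argumentation framework there is a unique maximal ideal extension. -/

import Mathlib

def conflictFree {α : Type*} (att : α → α → Prop) (E : Set α) : Prop :=
  ∀ a ∈ E, ∀ b ∈ E, ¬ att a b

def acceptable {α : Type*} (att : α → α → Prop) (E : Set α) (a : α) : Prop :=
  ∀ b, att b a → ∃ c ∈ E, att c b

def admissible {α : Type*} (att : α → α → Prop) (E : Set α) : Prop :=
  conflictFree att E ∧ ∀ a ∈ E, acceptable att E a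

def complete {α : Type*} (att : α → α → Prop) (E : Set α) : Prop :=
  admissible att E ∧ ∀ a, acceptable att E a → a ∈ E

def preferred {α : Type*} (att : α → α → Prop) (E : Set α) : Prop :=
  admissible att E ∧ ∀ E' : Set α, admissible att E' → E ⊆ E' → E' = E

/-- `E` is ideal: admissible and a subset of every preferred extension. -/
def ideal {α : Type*} (att : α → α → Prop) (E : Set α) : Prop :=
  admissible att E ∧ ∀ P : Set α, preferred att P → E ⊆ P

lemma acceptable_mono {α : Type*} {att : α → α → Prop} {E F : Set α} {a : α}
    (hEF : E ⊆ F) (h : acceptable att E a) : acceptable att F a := by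
  intro b hb
  obtain ⟨c, hc, hcb⟩ := h b hb
  exact ⟨c, hEF hc, hcb⟩

lemma admissible_insert {α : Type*} {att : α → α → Prop} {P : Set α} {a : α}
    (hP : admissible att P) (ha : acceptable att P a) : admissible att (insert a P) := by
  obtain ⟨hcf, hdef⟩ := hP
  have key : ∀ x ∈ P, ¬ att x a := by
    intro x hx hxa
    obtain ⟨c, hc, hcx⟩ := ha x hxa
    exact hcf c hc x hx hcx
  constructor
  · intro x hx y hy hxy
    rcases hx with rfl | hx
    · rcases hy with rfl | hy
      · obtain ⟨c, hc, hca⟩ := ha _ hxy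
        exact key c hc hca
      · -- a attacks y ∈ P, so P defends y, some d ∈ P attacks a, contradiction
        obtain ⟨d, hd, hda⟩ := hdef y hy _ hxy
        exact key d hd hda
    · rcases hy with rfl | hy
      · exact key x hx hxy
      · exact hcf x hx y hy hxy
  · intro x hx
    rcases hx with rfl | hx
    · exact acceptable_mono (Set.subset_insert x P) ha
    · exact acceptable_mono (Set.subset_insert a P) (hdef x hx)

lemma exists_preferred_superset {α : Type*} [Finite α] {att : α → α → Prop} {A : Set α}
    (hA : admissible att A) : ∃ P : Set α, preferred att P ∧ A ⊆ P := by
  have hfin : ({B : Set α | admissible att B ∧ A ⊆ B}).Finite := Set.toFinite _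
  have hne : ({B : Set α | admissible att B ∧ A ⊆ B}).Nonempty := ⟨A, hA, subset_rfl⟩
  obtain ⟨P, hP, hmax⟩ : ∃ P ∈ {B : Set α | admissible att B ∧ A ⊆ B},
      ∀ E' ∈ {B : Set α | admissible att B ∧ A ⊆ B}, id P ≤ id E' → id P = id E' := by
    obtain ⟨P, hP, hm⟩ := Set.Finite.exists_maximalFor id _ hfin hne
    exact ⟨P, hP, fun E' hE' h => le_antisymm h (hm hE' h)⟩
  refine ⟨P, ⟨hP.1, ?_⟩, hP.2⟩
  intro E' hE' hPE'
  exact (hmax E' ⟨hE', hP.2.trans hPE'⟩ hPE').symm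

lemma preferred_complete {α : Type*} {att : α → α → Prop} {P : Set α}
    (hP : preferred att P) : complete att P := by
  refine ⟨hP.1, fun a ha => ?_⟩
  have := hP.2 (insert a P) (admissible_insert hP.1 ha) (Set.subset_insert a P)
  rw [← this]; exact Set.mem_insert a P

theorem ideal_properties {α : Type*} [Finite α] (att : α → α → Prop)
    (hpref : ∃ P : Set α, preferred att P) :
    (∀ E C : Set α, ideal att E →
        complete att C → (∀ C' : Set α, complete att C' → C ⊆ C' → C' = C) → E ⊆ C) ∧
    (∀ E₁ E₂ : Set α, ideal att E₁ → ideal att E₂ → admissible att (E₁ ∪ E₂)) ∧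
    (∃! M : Set α, ideal att M ∧ ∀ E : Set α, ideal att E → E ⊆ M) := by
  obtain ⟨P₀, hP₀⟩ := hpref
  refine ⟨?_, ?_, ?_⟩
  · intro E C hE hC hmax
    obtain ⟨P, hP, hCP⟩ := exists_preferred_superset hC.1
    have : P = C := hmax P (preferred_complete hP) hCP
    exact this ▸ hE.2 P hP
  · intro E₁ E₂ h₁ h₂
    have hsub : E₁ ∪ E₂ ⊆ P₀ := Set.union_subset (h₁.2 P₀ hP₀) (h₂.2 P₀ hP₀)
    constructor
    · intro a ha b hb
      exact hP₀.1.1 a (hsub ha) b (hsub hb)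
    · intro a ha
      rcases ha with ha | ha
      · exact acceptable_mono Set.subset_union_left (h₁.1.2 a ha)
      · exact acceptable_mono Set.subset_union_right (h₂.1.2 a ha)
  · refine ⟨⋃₀ {E : Set α | ideal att E}, ⟨⟨?_, ?_⟩, ?_⟩, ?_⟩
    · have hsub : ⋃₀ {E : Set α | ideal att E} ⊆ P₀ :=
        Set.sUnion_subset fun E hE => hE.2 P₀ hP₀
      constructor
      · intro a ha b hb
        exact hP₀.1.1 a (hsub ha) b (hsub hb)
      · rintro a ⟨E, hE, haE⟩
        exact acceptable_mono (Set.subset_sUnion_of_mem hE) (hE.1.2 a haE)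
    · intro Q hQ
      exact Set.sUnion_subset fun E hE => hE.2 Q hQ
    · intro E hE
      exact Set.subset_sUnion_of_mem hE
    · rintro M ⟨hM, hMmax⟩
      apply Set.Subset.antisymm
      · exact Set.subset_sUnion_of_mem hM
      · exact Set.sUnion_subset fun E hE => hMmax E hE
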